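/- Let T be a bounded linear operator on a separable Banach space X which is AP_b-hypercyclic, let J : X → X** be the canonical embedding into the bidual, and let T** : X** → X** be the second adjoint of T. Then every point of J(X) is a norm limit of periodic points of T**; that is, for every x ∈ X and ε > 0 there exist Φ ∈ X** and n ≥ 1 with (T**)^n(Φ) = Φ and ‖J(x) − Φ‖ < ε. -/

import Mathlib

open NormedSpace Filter

/-- A set `A ⊆ ℕ` belongs to the family `AP_b` if it contains arbitrarily long
arithmetic progressions with some fixed common difference `k ≥ 1`. -/
def APb (A : Set ℕ) : Prop :=
  ∃ k : ℕ, 1 ≤ k ∧ ∀ m : ℕ, ∃ a : ℕ, ∀ j : ℕ, j ≤ m → a + j * k ∈ A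

set_option maxHeartbeats 1000000 in
/-- Let `T` be an `AP_b`-hypercyclic bounded operator on a separable
Banach space `X`, let `J : X → X**` be the canonical embedding, and `T** : X** → X**`
the second adjoint of `T` (here `Ts = T*` and `Tss = T**` are characterized by the
usual duality formulas). Then every point of `J(X)` is a norm limit of periodic points
of `T**`. -/
theorem points_of_X_are_limits_of_biadjoint_periodic_points
    {X : Type*} [NormedAddCommGroup X] [NormedSpace ℝ X] [CompleteSpace X]
    [TopologicalSpace.SeparableSpace X]
    (T : X →L[ℝ] X)
    (hAPb : ∃ x : X, ∀ U : Set X, IsOpen U → U.Nonempty → APb {n : ℕ | (T ^ n) x ∈ U})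
    (Ts : StrongDual ℝ X →L[ℝ] StrongDual ℝ X)
    (hTs : ∀ (φ : StrongDual ℝ X) (x : X), Ts φ x = φ (T x))
    (Tss : StrongDual ℝ (StrongDual ℝ X) →L[ℝ] StrongDual ℝ (StrongDual ℝ X))
    (hTss : ∀ (Φ : StrongDual ℝ (StrongDual ℝ X)) (φ : StrongDual ℝ X), Tss Φ φ = Φ (Ts φ)) :
    ∀ x : X, ∀ ε : ℝ, 0 < ε →
      ∃ Φ : StrongDual ℝ (StrongDual ℝ X), ∃ n : ℕ, 1 ≤ n ∧ (Tss ^ n) Φ = Φ ∧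
        ‖inclusionInDoubleDual ℝ X x - Φ‖ < ε := by
  -- iterated duality formulas
  have hTsk : ∀ (n : ℕ) (φ : StrongDual ℝ X) (v : X), (Ts ^ n) φ v = φ ((T ^ n) v) := by
    intro n
    induction n with
    | zero => intro φ v; simp
    | succ n ih =>
      intro φ v
      rw [pow_succ, ContinuousLinearMap.mul_apply, ih (Ts φ) v, hTs,
        pow_succ', ContinuousLinearMap.mul_apply]
  have hTssk : ∀ (n : ℕ) (Φ : StrongDual ℝ (StrongDual ℝ X)) (φ : StrongDual ℝ X),
      (Tss ^ n) Φ φ = Φ ((Ts ^ n) φ) := by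
    intro n
    induction n with
    | zero => intro Φ φ; simp
    | succ n ih =>
      intro Φ φ
      rw [pow_succ, ContinuousLinearMap.mul_apply, ih (Tss Φ) φ, hTss,
        pow_succ', ContinuousLinearMap.mul_apply]
  obtain ⟨y, hy⟩ := hAPb
  intro x ε hε
  set δ : ℝ := ε / 2 with hδdef
  have hδpos : 0 < δ := by positivity
  obtain ⟨k, hk1, hAP⟩ := hy (Metric.ball x δ) Metric.isOpen_ball
    ⟨x, Metric.mem_ball_self hδpos⟩
  choose a ha using hAP
  -- the orbit points in question
  set v : ℕ → ℕ → X := fun m j => (T ^ (a m + j * k)) y with hvdef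
  have hvmem : ∀ m j, j ≤ m → v m j ∈ Metric.ball x δ := fun m j hj => ha m j hj
  set C : ℝ := ‖x‖ + δ with hCdef
  have hCpos : 0 < C := by positivity
  have hvnorm : ∀ m j, j ≤ m → ‖v m j‖ ≤ C := by
    intro m j hj
    have h := Metric.mem_ball.1 (hvmem m j hj)
    rw [dist_eq_norm] at h
    have hxv : x + (v m j - x) = v m j := by abel
    calc ‖v m j‖ = ‖x + (v m j - x)‖ := by rw [hxv]
    _ ≤ ‖x‖ + ‖v m j - x‖ := norm_add_le _ _
    _ ≤ ‖x‖ + δ := by linarith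
  -- Cesàro averages
  set s : StrongDual ℝ X → ℕ → ℝ :=
    fun φ m => ((m : ℝ) + 1)⁻¹ * ∑ j ∈ Finset.range (m + 1), φ (v m j) with hsdef
  have hinvpos : ∀ m : ℕ, (0:ℝ) < ((m : ℝ) + 1)⁻¹ := by intro m; positivity
  have hterm : ∀ (φ : StrongDual ℝ X) m j, j ≤ m → |φ (v m j)| ≤ ‖φ‖ * C := by
    intro φ m j hj
    calc |φ (v m j)| ≤ ‖φ‖ * ‖v m j‖ := φ.le_opNorm _
    _ ≤ ‖φ‖ * C := mul_le_mul_of_nonneg_left (hvnorm m j hj) (norm_nonneg φ)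
  have hsbound : ∀ (φ : StrongDual ℝ X) m, |s φ m| ≤ ‖φ‖ * C := by
    intro φ m
    have hsum : |∑ j ∈ Finset.range (m + 1), φ (v m j)| ≤ ((m : ℝ) + 1) * (‖φ‖ * C) := by
      calc |∑ j ∈ Finset.range (m + 1), φ (v m j)|
          ≤ ∑ j ∈ Finset.range (m + 1), |φ (v m j)| := Finset.abs_sum_le_sum_abs _ _
      _ ≤ ∑ _j ∈ Finset.range (m + 1), ‖φ‖ * C := by
          apply Finset.sum_le_sum
          intro j hj
          exact hterm φ m j (Nat.lt_succ_iff.1 (Finset.mem_range.1 hj))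
      _ = ((m : ℝ) + 1) * (‖φ‖ * C) := by
          rw [Finset.sum_const, Finset.card_range, nsmul_eq_mul]; push_cast; ring
    have h1 : |s φ m| = ((m : ℝ) + 1)⁻¹ * |∑ j ∈ Finset.range (m + 1), φ (v m j)| := by
      rw [hsdef]; rw [abs_mul, abs_of_pos (hinvpos m)]
    rw [h1]
    have h2 : ((m : ℝ) + 1)⁻¹ * (((m : ℝ) + 1) * (‖φ‖ * C)) = ‖φ‖ * C := by
      field_simp
    calc ((m : ℝ) + 1)⁻¹ * |∑ j ∈ Finset.range (m + 1), φ (v m j)|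
        ≤ ((m : ℝ) + 1)⁻¹ * (((m : ℝ) + 1) * (‖φ‖ * C)) :=
          mul_le_mul_of_nonneg_left hsum (hinvpos m).le
    _ = ‖φ‖ * C := h2
  -- ultrafilter limit
  letI 𝒰 : Ultrafilter ℕ := Ultrafilter.of atTop
  have hUle : (𝒰 : Filter ℕ) ≤ atTop := Ultrafilter.of_le _
  have hexists : ∀ φ : StrongDual ℝ X, ∃ L : ℝ, Tendsto (s φ) (𝒰 : Filter ℕ) (nhds L) := by
    intro φ
    have hK : IsCompact (Set.Icc (-(‖φ‖ * C)) (‖φ‖ * C)) := isCompact_Icc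
    have hle : (Ultrafilter.map (s φ) 𝒰 : Filter ℝ) ≤ Filter.principal (Set.Icc (-(‖φ‖ * C)) (‖φ‖ * C)) := by
      rw [Ultrafilter.coe_map, Filter.le_principal_iff, Filter.mem_map]
      apply Filter.univ_mem'
      intro m
      have := hsbound φ m
      exact Set.mem_Icc.2 ⟨neg_le_of_abs_le this, le_of_abs_le this⟩
    obtain ⟨L, _, hL⟩ := hK.ultrafilter_le_nhds (Ultrafilter.map (s φ) 𝒰) hle
    exact ⟨L, hL⟩
  choose ℓ hℓ using hexists
  -- linearity of ℓ
  have hadd : ∀ φ ψ : StrongDual ℝ X, ℓ (φ + ψ) = ℓ φ + ℓ ψ := by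
    intro φ ψ
    have heq : s (φ + ψ) = fun m => s φ m + s ψ m := by
      funext m
      simp only [hsdef, ContinuousLinearMap.add_apply, Finset.sum_add_distrib, mul_add]
    refine tendsto_nhds_unique (hℓ (φ + ψ)) ?_
    rw [heq]
    exact (hℓ φ).add (hℓ ψ)
  have hsmul : ∀ (c : ℝ) (φ : StrongDual ℝ X), ℓ (c • φ) = c * ℓ φ := by
    intro c φ
    have heq : s (c • φ) = fun m => c * s φ m := by
      funext m
      simp only [hsdef, ContinuousLinearMap.smul_apply, smul_eq_mul, ← Finset.mul_sum]
      ring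
    refine tendsto_nhds_unique (hℓ (c • φ)) ?_
    rw [heq]
    exact (hℓ φ).const_mul c
  have hℓbound : ∀ φ : StrongDual ℝ X, ‖ℓ φ‖ ≤ C * ‖φ‖ := by
    intro φ
    have habs : Tendsto (fun m => |s φ m|) (𝒰 : Filter ℕ) (nhds |ℓ φ|) := (hℓ φ).abs
    have := le_of_tendsto habs (Filter.Eventually.of_forall fun m => hsbound φ m)
    rw [Real.norm_eq_abs]
    linarith [this]
  set Φ₀ : StrongDual ℝ X →ₗ[ℝ] ℝ :=
    { toFun := ℓ
      map_add' := hadd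
      map_smul' := by intro c φ; simpa using hsmul c φ } with hΦ₀def
  set Φ : StrongDual ℝ (StrongDual ℝ X) := LinearMap.mkContinuous Φ₀ C hℓbound with hΦdef
  have hΦapp : ∀ φ : StrongDual ℝ X, Φ φ = ℓ φ := fun φ => rfl
  refine ⟨Φ, k, hk1, ?_, ?_⟩
  · -- periodicity
    ext φ
    rw [hTssk k Φ φ, hΦapp, hΦapp]
    -- ℓ ((Ts ^ k) φ) = ℓ φ
    have hshift : ∀ m, s ((Ts ^ k) φ) m - s φ m
        = ((m : ℝ) + 1)⁻¹ * (φ (v m (m + 1)) - φ (v m 0)) := by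
      intro m
      have hTk : ∀ j, (Ts ^ k) φ (v m j) = φ (v m (j + 1)) := by
        intro j
        rw [hTsk k φ (v m j)]
        congr 1
        show (T ^ k) ((T ^ (a m + j * k)) y) = (T ^ (a m + (j + 1) * k)) y
        rw [← ContinuousLinearMap.mul_apply, ← pow_add]
        congr 2
        ring
      have h1 : s ((Ts ^ k) φ) m
          = ((m : ℝ) + 1)⁻¹ * ∑ j ∈ Finset.range (m + 1), φ (v m (j + 1)) := by
        rw [hsdef]
        simp only [hTk]
      have h2 : ∑ j ∈ Finset.range (m + 1), φ (v m (j + 1))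
          = ∑ j ∈ Finset.range (m + 1), φ (v m j) + φ (v m (m + 1)) - φ (v m 0) := by
        have := Finset.sum_range_succ' (fun j => φ (v m j)) (m + 1)
        have h3 := Finset.sum_range_succ (fun j => φ (v m j)) (m + 1)
        -- sum_range_succ' : ∑_{j<n+1} f j = ∑_{j<n} f (j+1) + f 0
        rw [h3] at this
        linarith [this]
      rw [h1, h2, hsdef]
      ring
    have hTkC : (0:ℝ) ≤ ‖T ^ k‖ := norm_nonneg _
    have hdiffbound : ∀ m, |s ((Ts ^ k) φ) m - s φ m|
        ≤ ((m : ℝ) + 1)⁻¹ * (‖φ‖ * (‖T ^ k‖ + 1) * C) := by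
      intro m
      rw [hshift m, abs_mul, abs_of_pos (hinvpos m)]
      have hb1 : |φ (v m (m + 1))| ≤ ‖φ‖ * ‖T ^ k‖ * C := by
        have hv : v m (m + 1) = (T ^ k) (v m m) := by
          show (T ^ (a m + (m+1) * k)) y = (T ^ k) ((T ^ (a m + m * k)) y)
          rw [← ContinuousLinearMap.mul_apply, ← pow_add]
          congr 2
          ring
        calc |φ (v m (m + 1))| ≤ ‖φ‖ * ‖v m (m + 1)‖ := φ.le_opNorm _
        _ ≤ ‖φ‖ * (‖T ^ k‖ * ‖v m m‖) := by
            rw [hv]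
            exact mul_le_mul_of_nonneg_left ((T ^ k).le_opNorm _) (norm_nonneg φ)
        _ ≤ ‖φ‖ * (‖T ^ k‖ * C) := mul_le_mul_of_nonneg_left
              (mul_le_mul_of_nonneg_left (hvnorm m m le_rfl) hTkC) (norm_nonneg φ)
        _ = ‖φ‖ * ‖T ^ k‖ * C := by ring
      have hb2 : |φ (v m 0)| ≤ ‖φ‖ * C := hterm φ m 0 (Nat.zero_le m)
      have : |φ (v m (m + 1)) - φ (v m 0)| ≤ ‖φ‖ * (‖T ^ k‖ + 1) * C := by
        calc |φ (v m (m + 1)) - φ (v m 0)| ≤ |φ (v m (m + 1))| + |φ (v m 0)| := abs_sub _ _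
        _ ≤ ‖φ‖ * ‖T ^ k‖ * C + ‖φ‖ * C := add_le_add hb1 hb2
        _ = ‖φ‖ * (‖T ^ k‖ + 1) * C := by ring
      exact mul_le_mul_of_nonneg_left this (hinvpos m).le
    have hdiff0 : Tendsto (fun m => s ((Ts ^ k) φ) m - s φ m) atTop (nhds 0) := by
      have h0 : Tendsto (fun m : ℕ => ((m : ℝ) + 1)⁻¹ * (‖φ‖ * (‖T ^ k‖ + 1) * C))
          atTop (nhds 0) := by
        have h1 := tendsto_one_div_add_atTop_nhds_zero_nat.mul_const
          (‖φ‖ * (‖T ^ k‖ + 1) * C)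
        rw [zero_mul] at h1
        simpa only [one_div] using h1
      exact squeeze_zero_norm
        (fun m => by rw [Real.norm_eq_abs]; exact hdiffbound m) h0
    have hdiff0U : Tendsto (fun m => s ((Ts ^ k) φ) m - s φ m) (𝒰 : Filter ℕ) (nhds 0) :=
      hdiff0.mono_left hUle
    have : Tendsto (s ((Ts ^ k) φ)) (𝒰 : Filter ℕ) (nhds (ℓ φ + 0)) := by
      have := (hℓ φ).add hdiff0U
      simpa using this
    rw [add_zero] at this
    exact tendsto_nhds_unique (hℓ ((Ts ^ k) φ)) this
  · -- distance estimate
    have hnear : ∀ (φ : StrongDual ℝ X) m, |φ x - s φ m| ≤ ‖φ‖ * δ := by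
      intro φ m
      have hx : φ x = ((m : ℝ) + 1)⁻¹ * ∑ _j ∈ Finset.range (m + 1), φ x := by
        rw [Finset.sum_const, Finset.card_range, nsmul_eq_mul]
        push_cast
        field_simp
      have hsplit : φ x - s φ m
          = ((m : ℝ) + 1)⁻¹ * ∑ j ∈ Finset.range (m + 1), (φ x - φ (v m j)) := by
        rw [Finset.sum_sub_distrib, mul_sub, ← hx, hsdef]
      have hsum : |∑ j ∈ Finset.range (m + 1), (φ x - φ (v m j))|
          ≤ ((m : ℝ) + 1) * (‖φ‖ * δ) := by
        calc |∑ j ∈ Finset.range (m + 1), (φ x - φ (v m j))|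
            ≤ ∑ j ∈ Finset.range (m + 1), |φ x - φ (v m j)| := Finset.abs_sum_le_sum_abs _ _
        _ ≤ ∑ _j ∈ Finset.range (m + 1), ‖φ‖ * δ := by
            apply Finset.sum_le_sum
            intro j hj
            have hj' : j ≤ m := Nat.lt_succ_iff.1 (Finset.mem_range.1 hj)
            have hd : ‖x - v m j‖ ≤ δ := by
              have := Metric.mem_ball.1 (hvmem m j hj')
              rw [dist_eq_norm] at this
              rw [← norm_neg]
              simpa [neg_sub] using this.le
            calc |φ x - φ (v m j)| = |φ (x - v m j)| := by rw [map_sub]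
            _ ≤ ‖φ‖ * ‖x - v m j‖ := φ.le_opNorm _
            _ ≤ ‖φ‖ * δ := mul_le_mul_of_nonneg_left hd (norm_nonneg φ)
        _ = ((m : ℝ) + 1) * (‖φ‖ * δ) := by
            rw [Finset.sum_const, Finset.card_range, nsmul_eq_mul]; push_cast; ring
      rw [hsplit, abs_mul, abs_of_pos (hinvpos m)]
      have h2 : ((m : ℝ) + 1)⁻¹ * (((m : ℝ) + 1) * (‖φ‖ * δ)) = ‖φ‖ * δ := by
        field_simp
      calc ((m : ℝ) + 1)⁻¹ * |∑ j ∈ Finset.range (m + 1), (φ x - φ (v m j))|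
          ≤ ((m : ℝ) + 1)⁻¹ * (((m : ℝ) + 1) * (‖φ‖ * δ)) :=
            mul_le_mul_of_nonneg_left hsum (hinvpos m).le
      _ = ‖φ‖ * δ := h2
    have hle : ‖inclusionInDoubleDual ℝ X x - Φ‖ ≤ δ := by
      apply ContinuousLinearMap.opNorm_le_bound _ hδpos.le
      intro φ
      have happ : (inclusionInDoubleDual ℝ X x - Φ) φ = φ x - ℓ φ := by
        simp [hΦapp, NormedSpace.inclusionInDoubleDual]
      rw [happ, Real.norm_eq_abs]
      have htend : Tendsto (fun m => |φ x - s φ m|) (𝒰 : Filter ℕ) (nhds |φ x - ℓ φ|) :=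
        (tendsto_const_nhds.sub (hℓ φ)).abs
      have := le_of_tendsto htend (Filter.Eventually.of_forall fun m => hnear φ m)
      linarith [this]
    calc ‖inclusionInDoubleDual ℝ X x - Φ‖ ≤ δ := hle
    _ < ε := by rw [hδdef]; linarith
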